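/- Let ℓ² denote the Hilbert space of square-summable complex sequences indexed by the non-negative integers, and let S : ℓ² → ℓ² be the shift operator, S(w_0, w_1, w_2, …) = (0, w_0, w_1, w_2, …). A closed subspace M of ℓ² with M ≠ {0} and M ≠ ℓ² satisfies S(M) ⊆ M if and only if there exists a sequence (λ_n)_{n≥0} ∈ M satisfying condition (c) — i.e. for every square-summable complex sequence (a_n)_{n≥0}, ∑_{n=0}^∞ |∑_{j=0}^n a_j λ_{n-j}|² = ∑_{n=0}^∞ |a_n|² — such that M is exactly the set of sequences of the form (∑_{k=0}^n λ_k c_{n-k})_{n=0}^∞ with (c_n)_{n≥0} ∈ ℓ². -/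

import Mathlib

/-- Condition (c): for every square-summable complex sequence `a`, the
Cauchy product of `a` with `l` has the same `ℓ²` sum as `a`. -/
def ConditionC (l : ℕ → ℂ) : Prop :=
  ∀ a : ℕ → ℂ, Summable (fun n => ‖a n‖ ^ 2) →
    ∑' n : ℕ, ‖∑ j ∈ Finset.range (n + 1), a j * l (n - j)‖ ^ 2 = ∑' n : ℕ, ‖a n‖ ^ 2

/-- The underlying function of the shift: `(w₀, w₁, …) ↦ (0, w₀, w₁, …)`. -/
def shiftSeq (w : ℕ → ℂ) : ℕ → ℂ
  | 0 => 0
  | n + 1 => w n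

theorem shiftSeq_memℓp (w : lp (fun _ : ℕ => ℂ) 2) : Memℓp (shiftSeq ⇑w) 2 := by
  apply memℓp_gen
  have hw : Summable fun n : ℕ => ‖w n‖ ^ (2 : ENNReal).toReal :=
    (memℓp_gen_iff (by norm_num)).1 (lp.memℓp w)
  exact (summable_nat_add_iff 1).mp hw

/-- The shift operator `S` on `ℓ²`: `S(w₀, w₁, w₂, …) = (0, w₀, w₁, w₂, …)`. -/
def shiftL2 (w : lp (fun _ : ℕ => ℂ) 2) : lp (fun _ : ℕ => ℂ) 2 :=
  ⟨shiftSeq ⇑w, shiftSeq_memℓp w⟩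

noncomputable section

open scoped ComplexConjugate

namespace BeurlingProof

local notation "⟪" x ", " y "⟫" => @inner ℂ _ _ x y

abbrev Hsp : Type := lp (fun _ : ℕ => ℂ) 2
abbrev Zsp : Type := lp (fun _ : ℤ => ℂ) 2

@[simp] lemma shiftL2_coe (w : Hsp) : ⇑(shiftL2 w) = shiftSeq ⇑w := rfl

lemma norm_shiftL2 (w : Hsp) : ‖shiftL2 w‖ = ‖w‖ := by
  have h2 : (0 : ℝ) < (2 : ENNReal).toReal := by norm_num
  rw [lp.norm_eq_tsum_rpow h2, lp.norm_eq_tsum_rpow h2]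
  congr 1
  have hs : Summable fun n : ℕ => ‖shiftL2 w n‖ ^ (2 : ENNReal).toReal :=
    (memℓp_gen_iff h2).1 (lp.memℓp (shiftL2 w))
  have := hs.tsum_eq_zero_add
  simpa [shiftSeq] using this

/-- The shift as a linear isometry. -/
def Sh : Hsp →ₗᵢ[ℂ] Hsp where
  toFun := shiftL2
  map_add' u v := by
    apply lp.ext
    funext n
    cases n <;> simp [shiftSeq, lp.coeFn_add]
    · exact (add_zero (0 : ℂ)).symm
    · rfl
  map_smul' c u := by
    apply lp.ext
    funext n
    cases n <;> simp [shiftSeq, lp.coeFn_smul]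
  norm_map' := norm_shiftL2

@[simp] lemma Sh_apply (w : Hsp) : Sh w = shiftL2 w := rfl

/-- Iterated shift. -/
def Spow : ℕ → (Hsp →ₗᵢ[ℂ] Hsp)
  | 0 => LinearIsometry.id
  | n + 1 => Sh.comp (Spow n)

@[simp] lemma Spow_zero (w : Hsp) : Spow 0 w = w := rfl

lemma Spow_succ (n : ℕ) (w : Hsp) : Spow (n + 1) w = Sh (Spow n w) := rfl

lemma Spow_succ' (n : ℕ) (w : Hsp) : Spow (n + 1) w = Spow n (Sh w) := by
  induction n with
  | zero => rfl
  | succ n ih => rw [Spow_succ, Spow_succ n (Sh w), ← ih, Spow_succ]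

lemma Spow_add (a b : ℕ) (w : Hsp) : Spow (a + b) w = Spow a (Spow b w) := by
  induction a with
  | zero => simp
  | succ a ih => rw [Nat.succ_add, Spow_succ, Spow_succ, ih]

lemma Spow_apply (n : ℕ) (w : Hsp) (k : ℕ) :
    (Spow n w) k = if k < n then 0 else w (k - n) := by
  induction n generalizing k with
  | zero => simp
  | succ n ih =>
    rw [Spow_succ]
    cases k with
    | zero => simp [shiftSeq]
    | succ k =>
      have : (Sh (Spow n w)) (k + 1) = (Spow n w) k := rfl
      rw [this, ih k]
      simp [Nat.succ_lt_succ_iff, Nat.succ_sub_succ]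

lemma inner_lp {ι : Type*} (f g : lp (fun _ : ι => ℂ) 2) :
    ⟪f, g⟫ = ∑' i, conj (f i) * g i := by
  rw [lp.inner_eq_tsum]
  refine tsum_congr fun i => ?_
  exact RCLike.inner_apply' _ _

/-- Evaluation at a coordinate, as a continuous linear map. -/
def evalCLM (ι : Type*) (k : ι) : lp (fun _ : ι => ℂ) 2 →L[ℂ] ℂ :=
  LinearMap.mkContinuous
    { toFun := fun f => f k
      map_add' := fun f g => by simp [lp.coeFn_add]
      map_smul' := fun c f => by simp [lp.coeFn_smul] }
    1 (fun f => by
      show ‖f k‖ ≤ 1 * ‖f‖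
      simpa using lp.norm_apply_le_norm (by norm_num : (2 : ENNReal) ≠ 0) f k)

@[simp] lemma evalCLM_apply {ι : Type*} (k : ι) (f : lp (fun _ : ι => ℂ) 2) :
    evalCLM ι k f = f k := rfl

lemma inner_Spow_left (u v : Hsp) (n : ℕ) :
    ⟪Spow n u, v⟫ = ∑' i : ℕ, conj (u i) * v (i + n) := by
  rw [inner_lp]
  rw [← Function.Injective.tsum_eq (g := fun i : ℕ => i + n) (add_left_injective n)]
  · refine tsum_congr fun i => ?_
    rw [Spow_apply]
    simp
  · intro k hk
    have hk' : (Spow n u) k ≠ 0 := by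
      intro h0
      apply hk
      show conj ((Spow n u) k) * v k = 0
      rw [h0]; simp
    rw [Spow_apply] at hk'
    have hnk : n ≤ k := by by_contra h; exact hk' (if_pos (by omega))
    exact ⟨k - n, by show k - n + n = k; omega⟩

lemma inner_Spow_right (u v : Hsp) (n : ℕ) :
    ⟪u, Spow n v⟫ = ∑' i : ℕ, conj (u (i + n)) * v i := by
  rw [inner_lp]
  rw [← Function.Injective.tsum_eq (g := fun i : ℕ => i + n) (add_left_injective n)]
  · refine tsum_congr fun i => ?_
    rw [Spow_apply]
    simp
  · intro k hk
    have hk' : (Spow n v) k ≠ 0 := by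
      intro h0
      apply hk
      show conj (u k) * (Spow n v) k = 0
      rw [h0]; simp
    rw [Spow_apply] at hk'
    have hnk : n ≤ k := by by_contra h; exact hk' (if_pos (by omega))
    exact ⟨k - n, by show k - n + n = k; omega⟩

lemma orthonormal_Spow {u : Hsp} (hu : ‖u‖ = 1)
    (h : ∀ j : ℕ, 1 ≤ j → ⟪u, Spow j u⟫ = 0) :
    Orthonormal ℂ (fun n : ℕ => Spow n u) := by
  have key : ∀ m n : ℕ, m ≤ n → ⟪Spow m u, Spow n u⟫ = ⟪u, Spow (n - m) u⟫ := by
    intro m n hmn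
    conv_lhs => rw [show n = m + (n - m) by omega, Spow_add]
    exact (Spow m).inner_map_map u (Spow (n - m) u)
  rw [orthonormal_iff_ite]
  intro m n
  rcases le_or_gt m n with hmn | hnm
  · rw [key m n hmn]
    rcases eq_or_lt_of_le hmn with rfl | hlt
    · simp only [Nat.sub_self, if_pos rfl]
      have : ⟪u, Spow 0 u⟫ = (‖u‖ : ℂ) ^ 2 := by
        rw [Spow_zero]; exact inner_self_eq_norm_sq_to_K u
      rw [this, hu]; norm_num
    · rw [h (n - m) (by omega), if_neg (by omega)]
  · have : ⟪Spow m u, Spow n u⟫ = conj ⟪Spow n u, Spow m u⟫ := (inner_conj_symm _ _).symm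
    rw [this, key n m hnm.le, h (m - n) (by omega), if_neg (by omega)]
    simp

lemma memℓp_two_of_sq {ι : Type*} {f : ι → ℂ} (h : Summable fun i => ‖f i‖ ^ 2) :
    Memℓp f 2 := by
  apply memℓp_gen
  have h2 : (2 : ENNReal).toReal = ((2 : ℕ) : ℝ) := by norm_num
  rw [h2]
  simpa only [Real.rpow_natCast] using h

lemma tsum_norm_sq {ι : Type*} (x : lp (fun _ : ι => ℂ) 2) :
    ∑' i, ‖x i‖ ^ 2 = ‖x‖ ^ 2 := by
  have h2 : (0 : ℝ) < (2 : ENNReal).toReal := by norm_num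
  have h := lp.norm_rpow_eq_tsum h2 x
  have h2' : (2 : ENNReal).toReal = ((2 : ℕ) : ℝ) := by norm_num
  rw [h2'] at h
  simp only [Real.rpow_natCast] at h
  exact h.symm

section Tmap

variable {u : Hsp} (h : Orthonormal ℂ (fun n : ℕ => Spow n u))

/-- The isometry `c ↦ ∑ cₙ Sⁿu` associated to the orthonormal family of shifts of `u`. -/
def Tmap : Hsp →ₗᵢ[ℂ] Hsp := h.orthogonalFamily.linearIsometry

lemma hasSum_Tmap (c : Hsp) :
    HasSum (fun n : ℕ => c n • Spow n u) (Tmap h c) := by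
  have := h.orthogonalFamily.hasSum_linearIsometry c
  exact this

lemma sum_reflect (f g : ℕ → ℂ) (k : ℕ) :
    ∑ j ∈ Finset.range (k + 1), f j * g (k - j)
      = ∑ j ∈ Finset.range (k + 1), g j * f (k - j) := by
  rw [← Finset.sum_range_reflect]
  apply Finset.sum_congr rfl
  intro j hj
  have hjk : j ≤ k := by
    have := Finset.mem_range.1 hj; omega
  have h1 : k + 1 - 1 - j = k - j := by omega
  have h2 : k - (k - j) = j := by omega
  rw [h1, h2, mul_comm]

lemma Tmap_coord (c : Hsp) (k : ℕ) :
    (Tmap h c) k = ∑ j ∈ Finset.range (k + 1), c j * u (k - j) := by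
  have hs := (hasSum_Tmap h c).mapL (evalCLM ℕ k)
  have hfun : (fun n : ℕ => evalCLM ℕ k (c n • Spow n u))
      = fun n : ℕ => c n * (Spow n u) k := by
    funext n
    rw [map_smul]
    simp [smul_eq_mul]
  rw [hfun] at hs
  have h2 := hs.tsum_eq
  simp only [evalCLM_apply] at h2
  rw [← h2]
  rw [tsum_eq_sum (s := Finset.range (k + 1)) ?_]
  · apply Finset.sum_congr rfl
    intro j hj
    have hjk : j ≤ k := by have := Finset.mem_range.1 hj; omega
    rw [Spow_apply, if_neg (by omega)]
  · intro n hn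
    have hkn : k < n := by
      rcases Finset.mem_range.not.1 hn with h'
      omega
    rw [Spow_apply, if_pos hkn, mul_zero]

lemma Tmap_coord' (c : Hsp) (k : ℕ) :
    (Tmap h c) k = ∑ j ∈ Finset.range (k + 1), u j * c (k - j) := by
  rw [Tmap_coord h c k, sum_reflect]

include h in
lemma conditionC_of_orthonormal : ConditionC ⇑u := by
  intro a ha
  have ha' : Memℓp a 2 := memℓp_two_of_sq ha
  set c : Hsp := ⟨a, ha'⟩ with hc
  have hcoe : ∀ n, c n = a n := fun _ => rfl
  have h1 : (fun n : ℕ => ‖∑ j ∈ Finset.range (n + 1), a j * u (n - j)‖ ^ 2)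
      = fun n : ℕ => ‖(Tmap h c) n‖ ^ 2 := by
    funext n
    rw [Tmap_coord h c n]
  rw [h1, tsum_norm_sq ((Tmap h) c), (Tmap h).norm_map]
  exact (tsum_norm_sq c).symm

lemma inner_Tmap (c : Hsp) (n : ℕ) : ⟪Spow n u, Tmap h c⟫ = c n := by
  have hs := (hasSum_Tmap h c).mapL (innerSL ℂ (Spow n u))
  have hfun : (fun m : ℕ => innerSL ℂ (Spow n u) (c m • Spow m u))
      = fun m : ℕ => if m = n then c n else 0 := by
    funext m
    rw [innerSL_apply_apply, inner_smul_right, orthonormal_iff_ite.1 h n m]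
    by_cases hm : m = n
    · subst hm; simp
    · simp [hm, Ne.symm hm]
  rw [hfun] at hs
  exact hs.unique (hasSum_ite_eq n (c n))

end Tmap

lemma summable_norm_sq {ι : Type*} (x : lp (fun _ : ι => ℂ) 2) :
    Summable fun i => ‖x i‖ ^ 2 := by
  have h2 : (0 : ℝ) < (2 : ENNReal).toReal := by norm_num
  have h := (memℓp_gen_iff h2).1 (lp.memℓp x)
  have h2' : (2 : ENNReal).toReal = ((2 : ℕ) : ℝ) := by norm_num
  rw [h2'] at h
  simpa only [Real.rpow_natCast] using h

section Zside

/-- Extension by zero of a sequence indexed by `ℕ` to one indexed by `ℤ`. -/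
def extFun (u : Hsp) (k : ℤ) : ℂ := if 0 ≤ k then u k.toNat else 0

lemma extFun_ofNat (u : Hsp) (n : ℕ) : extFun u (n : ℤ) = u n := by
  simp [extFun]

lemma extFun_neg (u : Hsp) (k : ℤ) (hk : k < 0) : extFun u k = 0 :=
  if_neg (not_le.2 hk)

lemma extFun_summable (u : Hsp) : Summable fun k : ℤ => ‖extFun u k‖ ^ 2 := by
  apply Summable.of_nat_of_neg
  · have : (fun n : ℕ => ‖extFun u (n : ℤ)‖ ^ 2) = fun n : ℕ => ‖u n‖ ^ 2 := by
      funext n; rw [extFun_ofNat]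
    rw [this]
    exact summable_norm_sq u
  · apply summable_of_ne_finset_zero (s := ({0} : Finset ℕ))
    intro n hn
    have hn0 : n ≠ 0 := by simpa using hn
    rw [extFun_neg u _ (by omega : -(n : ℤ) < 0)]
    simp

def extZ (u : Hsp) : Zsp := ⟨extFun u, memℓp_two_of_sq (extFun_summable u)⟩

@[simp] lemma extZ_coe (u : Hsp) : ⇑(extZ u) = extFun u := rfl

/-- Translation on two-sided `ℓ²`. -/
def transZ (d : ℤ) (U : Zsp) : Zsp :=
  ⟨fun k => U (k - d), memℓp_two_of_sq (by
    have h := ((Equiv.subRight d).summable_iff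
      (f := fun k : ℤ => ‖U k‖ ^ 2)).2 (summable_norm_sq U)
    have heq : ((fun k : ℤ => ‖U k‖ ^ 2) ∘ (Equiv.subRight d))
        = fun k : ℤ => ‖U (k - d)‖ ^ 2 := rfl
    rwa [heq] at h)⟩

@[simp] lemma transZ_coe (d : ℤ) (U : Zsp) (k : ℤ) : (transZ d U) k = U (k - d) := rfl

lemma inner_transZ (U V : Zsp) (m n : ℤ) :
    ⟪transZ m U, transZ n V⟫ = ∑' j : ℤ, conj (U j) * V (j + (m - n)) := by
  rw [inner_lp]
  rw [← (Equiv.addRight m).tsum_eq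
    (fun k : ℤ => conj ((transZ m U) k) * (transZ n V) k)]
  refine tsum_congr fun j => ?_
  show conj ((transZ m U) (j + m)) * (transZ n V) (j + m) = _
  rw [transZ_coe, transZ_coe]
  have e1 : j + m - m = j := by omega
  have e2 : j + m - n = j + (m - n) := by omega
  rw [e1, e2]

lemma tsum_corr (u v : Hsp) (d : ℤ) :
    ∑' j : ℤ, conj ((extZ u) j) * (extZ v) (j + d)
      = if 0 ≤ d then ⟪Spow d.toNat u, v⟫ else ⟪u, Spow (-d).toNat v⟫ := by
  rw [← Function.Injective.tsum_eq (g := fun i : ℕ => (i : ℤ))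
    Nat.cast_injective ?_]
  · split_ifs with hd
    · rw [inner_Spow_left]
      refine tsum_congr fun i => ?_
      show conj ((extZ u) (i : ℤ)) * (extZ v) ((i : ℤ) + d) = _
      rw [extZ_coe, extZ_coe, extFun_ofNat]
      congr 1
      have : (i : ℤ) + d = ((i + d.toNat : ℕ) : ℤ) := by omega
      rw [this, extFun_ofNat]
    · rw [inner_lp]
      refine tsum_congr fun i => ?_
      show conj ((extZ u) (i : ℤ)) * (extZ v) ((i : ℤ) + d) = _
      rw [extZ_coe, extZ_coe, extFun_ofNat]
      congr 1
      rw [Spow_apply]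
      rcases lt_or_ge (i : ℤ) (-d) with h | h
      · rw [extFun_neg _ _ (by omega), if_pos (by omega)]
      · have : (i : ℤ) + d = ((i - (-d).toNat : ℕ) : ℤ) := by omega
        rw [this, extFun_ofNat, if_neg (by omega)]
  · intro k hk
    rcases le_or_gt 0 k with h | h
    · exact ⟨k.toNat, by simp [Int.toNat_of_nonneg h]⟩
    · exfalso
      apply hk
      show conj ((extZ u) k) * (extZ v) (k + d) = 0
      rw [extZ_coe, extFun_neg _ _ h]
      simp

/-- The key lemma: if `u` is a unit vector orthogonal to all its shifts, and `v` is
orthogonal to all shifts of `u` while `u` is orthogonal to all proper shifts of `v`,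
then `v = 0`. -/
lemma killer {u v : Hsp} (hu : ‖u‖ = 1)
    (hauto : ∀ j : ℕ, 1 ≤ j → ⟪u, Spow j u⟫ = 0)
    (h1 : ∀ n : ℕ, ⟪Spow n u, v⟫ = 0)
    (h2 : ∀ j : ℕ, 1 ≤ j → ⟪u, Spow j v⟫ = 0) : v = 0 := by
  have hON : Orthonormal ℂ (fun d : ℤ => transZ d (extZ u)) := by
    rw [orthonormal_iff_ite]
    intro m n
    rw [inner_transZ, tsum_corr u u (m - n)]
    by_cases hmn : m = n
    · subst hmn
      rw [if_pos rfl, if_pos (by omega)]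
      have h0 : (m - m).toNat = 0 := by omega
      rw [h0]
      have : ⟪Spow 0 u, u⟫ = (‖u‖ : ℂ) ^ 2 := by
        rw [Spow_zero]; exact inner_self_eq_norm_sq_to_K u
      rw [this, hu]; norm_num
    · rw [if_neg hmn]
      split_ifs with hd
      · rw [← inner_conj_symm, hauto (m - n).toNat (by omega), map_zero]
      · exact hauto (-(m - n)).toNat (by omega)
  have hcs : Summable fun k : ℤ => ‖conj ((extZ v) (-k))‖ ^ 2 := by
    have : (fun k : ℤ => ‖conj ((extZ v) (-k))‖ ^ 2)
        = (fun k : ℤ => ‖(extZ v) k‖ ^ 2) ∘ (Equiv.neg ℤ) := by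
      funext k
      simp [Function.comp]
    rw [this]
    exact ((Equiv.neg ℤ).summable_iff (f := fun k : ℤ => ‖(extZ v) k‖ ^ 2)).2
      (summable_norm_sq (extZ v))
  set c : Zsp := ⟨fun k => conj ((extZ v) (-k)), memℓp_two_of_sq hcs⟩ with hcdef
  have hc_coe : ∀ k : ℤ, c k = conj ((extZ v) (-k)) := fun _ => rfl
  set Q : Zsp := hON.orthogonalFamily.linearIsometry c with hQdef
  have hQsum : HasSum (fun k : ℤ => c k • transZ k (extZ u)) Q := by
    have := hON.orthogonalFamily.hasSum_linearIsometry c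
    simpa only [LinearIsometry.toSpanSingleton_apply] using this
  have hQ0 : Q = 0 := by
    apply lp.ext
    funext n
    have hs := hQsum.mapL (evalCLM ℤ n)
    have hfun : (fun k : ℤ => evalCLM ℤ n (c k • transZ k (extZ u)))
        = fun k : ℤ => conj ((extZ v) (-k)) * (extZ u) (n - k) := by
      funext k
      rw [map_smul]
      show c k • (transZ k (extZ u)) n = _
      rw [transZ_coe, hc_coe, smul_eq_mul]
    rw [hfun] at hs
    have htsum := hs.tsum_eq
    simp only [evalCLM_apply] at htsum
    have hval : ∑' k : ℤ, conj ((extZ v) (-k)) * (extZ u) (n - k) = 0 := by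
      rw [← (Equiv.neg ℤ).tsum_eq
        (fun k : ℤ => conj ((extZ v) (-k)) * (extZ u) (n - k))]
      simp only [Equiv.neg_apply, neg_neg, sub_neg_eq_add]
      have hcomm : (fun j : ℤ => conj ((extZ v) j) * (extZ u) (n + j))
          = fun j : ℤ => conj ((extZ v) j) * (extZ u) (j + n) := by
        funext j; rw [add_comm n j]
      rw [hcomm, tsum_corr v u n]
      split_ifs with hn
      · rw [← inner_conj_symm]
        rcases Nat.eq_zero_or_pos n.toNat with h0 | hpos
        · rw [h0]
          have : ⟪u, Spow 0 v⟫ = ⟪Spow 0 u, v⟫ := by rw [Spow_zero, Spow_zero]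
          rw [this, h1 0, map_zero]
        · rw [h2 n.toNat hpos, map_zero]
      · rw [← inner_conj_symm, h1 (-n).toNat, map_zero]
    have hQn : (Q : ℤ → ℂ) n = 0 := by rw [← htsum]; exact hval
    rw [hQn]
    simp [lp.coeFn_zero]
  have hcnorm : ‖c‖ = 0 := by
    have := hON.orthogonalFamily.linearIsometry.norm_map c
    rw [← hQdef, hQ0] at this
    simpa using this.symm
  have hc0 : c = 0 := norm_eq_zero.1 hcnorm
  apply lp.ext
  funext i
  have h := hc_coe (-(i : ℤ))
  rw [hc0] at h
  simp only [neg_neg] at h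
  have hvi : conj ((extZ v) (i : ℤ)) = 0 := by
    rw [← h]
    simp [lp.coeFn_zero]
  have hv : v i = 0 := by
    have h2 : (extZ v) (i : ℤ) = 0 := by simpa using congrArg conj hvi
    rw [extZ_coe, extFun_ofNat] at h2
    exact h2
  rw [hv]
  simp [lp.coeFn_zero]

end Zside

end BeurlingProof

end

open BeurlingProof

/-- Sequential form of Beurling's theorem: a closed nontrivial proper subspace `M` of
`ℓ²` is invariant under the shift iff there is a sequence `λ ∈ M` satisfying
condition (c) such that `M` consists exactly of the Cauchy products of `λ` with
`ℓ²` sequences. -/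
theorem beurling_l2 (M : Submodule ℂ (lp (fun _ : ℕ => ℂ) 2))
    (hM_closed : IsClosed (M : Set (lp (fun _ : ℕ => ℂ) 2)))
    (hM_ne_bot : M ≠ ⊥) (hM_ne_top : M ≠ ⊤) :
    (∀ w ∈ M, shiftL2 w ∈ M) ↔
      ∃ l : lp (fun _ : ℕ => ℂ) 2, l ∈ M ∧ ConditionC (⇑l) ∧
        ∀ w : lp (fun _ : ℕ => ℂ) 2,
          w ∈ M ↔ ∃ c : lp (fun _ : ℕ => ℂ) 2,
            ∀ n : ℕ, w n = ∑ k ∈ Finset.range (n + 1), l k * c (n - k) := by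
  classical
  constructor
  · intro hS
    have hSmem : ∀ n : ℕ, ∀ x ∈ M, Spow n x ∈ M := by
      intro n
      induction n with
      | zero => intro x hx; exact hx
      | succ n ih => intro x hx; exact hS _ (ih x hx)
    set K : Submodule ℂ Hsp := M.map Sh.toLinearMap with hK
    have hKM : K ≤ M := by
      rintro _ ⟨x, hx, rfl⟩
      exact hS x hx
    have hKcomplete : IsComplete (K : Set Hsp) := by
      have hKset : (K : Set Hsp) = ⇑Sh '' (M : Set Hsp) := by
        rw [hK]; rfl
      rw [hKset]
      exact (isComplete_image_iff Sh.isometry.isUniformInducing).2 hM_closed.isComplete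
    haveI : CompleteSpace K := hKcomplete.completeSpace_coe
    have hWex : ∃ x : Hsp, x ∈ M ∧ x ∈ Kᗮ ∧ x ≠ 0 := by
      by_contra hcon
      push_neg at hcon
      have hMK : ∀ x ∈ M, x ∈ K := by
        intro x hx
        have hp : (K.orthogonalProjectionOnto x : Hsp) ∈ K := SetLike.coe_mem _
        have hres := Submodule.sub_starProjection_mem_orthogonal (K := K) x
        have hsub : x - K.orthogonalProjectionOnto x ∈ M := sub_mem hx (hKM hp)
        have h0 := hcon _ hsub hres
        have hx' : x = K.orthogonalProjectionOnto x := by rwa [sub_eq_zero] at h0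
        rw [hx']; exact hp
      have hdiv : ∀ n : ℕ, ∀ x ∈ M, ∃ y ∈ M, x = Spow n y := by
        intro n
        induction n with
        | zero => exact fun x hx => ⟨x, hx, rfl⟩
        | succ n ih =>
          intro x hx
          rcases Submodule.mem_map.1 (hMK x hx) with ⟨z, hz, hzx⟩
          rcases ih z hz with ⟨y, hy, rfl⟩
          exact ⟨y, hy, by rw [← hzx]; rfl⟩
      have hM0 : M = ⊥ := by
        rw [Submodule.eq_bot_iff]
        intro x hx
        apply lp.ext; funext k
        rcases hdiv (k + 1) x hx with ⟨y, hy, rfl⟩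
        rw [Spow_apply, if_pos (by omega)]
        simp [lp.coeFn_zero]
      exact hM_ne_bot hM0
    obtain ⟨x0, hx0M, hx0K, hx0ne⟩ := hWex
    set l : Hsp := (‖x0‖ : ℂ)⁻¹ • x0 with hl
    have hx0n : ‖x0‖ ≠ 0 := norm_ne_zero_iff.2 hx0ne
    have hlnorm : ‖l‖ = 1 := by
      rw [hl, norm_smul, norm_inv]
      simp only [Complex.norm_real, abs_norm, norm_norm]
      exact inv_mul_cancel₀ hx0n
    have hlM : l ∈ M := M.smul_mem _ hx0M
    have hlK : l ∈ Kᗮ := Kᗮ.smul_mem _ hx0K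
    have hlperp : ∀ y ∈ M, (inner ℂ l (Sh y) : ℂ) = 0 := by
      intro y hy
      have h1 : (inner ℂ (Sh y) l : ℂ) = 0 :=
        (Submodule.mem_orthogonal K l).1 hlK _ (Submodule.mem_map_of_mem hy)
      rw [← inner_conj_symm, h1, map_zero]
    have hauto : ∀ j : ℕ, 1 ≤ j → (inner ℂ l (Spow j l) : ℂ) = 0 := by
      intro j hj
      obtain ⟨m, rfl⟩ : ∃ m, j = m + 1 := ⟨j - 1, by omega⟩
      exact hlperp (Spow m l) (hSmem m l hlM)
    have horm := orthonormal_Spow hlnorm hauto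
    have hTmem : ∀ c : Hsp, Tmap horm c ∈ M := by
      intro c
      refine hM_closed.mem_of_tendsto (hasSum_Tmap horm c) ?_
      filter_upwards with s
      exact Submodule.sum_mem M fun n _ => M.smul_mem _ (hSmem n l hlM)
    refine ⟨l, hlM, conditionC_of_orthonormal horm, ?_⟩
    intro w
    constructor
    · intro hw
      set a : ℕ → ℂ := fun n => inner ℂ (Spow n l) w with ha
      have haS : Memℓp a 2 := memℓp_two_of_sq (horm.inner_products_summable w)
      set c : Hsp := ⟨a, haS⟩ with hc
      have hr : w - Tmap horm c = 0 := by
        apply killer hlnorm hauto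
        · intro n
          rw [inner_sub_right, inner_Tmap horm c n]
          have hcn : (c : ℕ → ℂ) n = inner ℂ (Spow n l) w := rfl
          rw [hcn, sub_self]
        · intro j hj
          obtain ⟨m, rfl⟩ : ∃ m, j = m + 1 := ⟨j - 1, by omega⟩
          exact hlperp _ (hSmem m _ (M.sub_mem hw (hTmem c)))
      have hw' : w = Tmap horm c := by rwa [sub_eq_zero] at hr
      refine ⟨c, fun n => ?_⟩
      rw [hw', Tmap_coord' horm c n]
    · rintro ⟨c, hcw⟩
      have hw' : w = Tmap horm c := by
        apply lp.ext; funext n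
        rw [hcw n, Tmap_coord' horm c n]
      rw [hw']
      exact hTmem c
  · rintro ⟨l, hlM, _, hchar⟩
    intro w hw
    rcases (hchar w).1 hw with ⟨c, hcw⟩
    apply (hchar (shiftL2 w)).2
    refine ⟨shiftL2 c, fun n => ?_⟩
    cases n with
    | zero =>
      show shiftSeq ⇑w 0 = _
      simp [shiftSeq, shiftL2]
    | succ n =>
      show shiftSeq ⇑w (n + 1) = _
      rw [Finset.sum_range_succ (n := n + 1)]
      have hlast : (shiftL2 c) (n + 1 - (n + 1)) = 0 := by
        rw [Nat.sub_self]
        rfl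
      rw [hlast, mul_zero, add_zero]
      have hsum : ∑ k ∈ Finset.range (n + 1), l k * (shiftL2 c) (n + 1 - k)
          = ∑ k ∈ Finset.range (n + 1), l k * c (n - k) := by
        refine Finset.sum_congr rfl fun k hk => ?_
        have hk' : k ≤ n := by
          have := Finset.mem_range.1 hk; omega
        have hidx : n + 1 - k = (n - k) + 1 := by omega
        rw [hidx]
        rfl
      rw [hsum]
      exact hcw n
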